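/- (Dines' theorem) Let A, B be symmetric n×n real matrices. Then the set R(A,B) = {(xᵀAx, xᵀBx) : x ∈ R^n} is a convex subset of R². -/

import Mathlib

open scoped Matrix


lemma quad_expand {n} (A : Matrix (Fin n) (Fin n) ℝ) (hA : A.IsSymm) (x y : Fin n → ℝ) (α β : ℝ) :
    (α • x + β • y) ⬝ᵥ A *ᵥ (α • x + β • y) =
      α^2 * (x ⬝ᵥ A *ᵥ x) + 2*(α*β)*(x ⬝ᵥ A *ᵥ y) + β^2 * (y ⬝ᵥ A *ᵥ y) := by
  have hsymm : y ⬝ᵥ A *ᵥ x = x ⬝ᵥ A *ᵥ y := by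
    rw [Matrix.dotProduct_mulVec, ← Matrix.mulVec_transpose, hA.eq, dotProduct_comm]
  simp only [Matrix.mulVec_add, Matrix.mulVec_smul, add_dotProduct,
    dotProduct_add, smul_dotProduct, dotProduct_smul,
    smul_eq_mul, hsymm]
  ring

lemma aux_root (X Y Z : ℝ → ℝ) (hX : Continuous X) (hY : Continuous Y) (hZ : Continuous Z)
    (hX0 : 0 < X 0) (hY0 : 0 < Y 0) (hZ0 : Z 0 = 0) (s₀ : ℝ) (hs₀ : 0 ≤ s₀)
    (h : X s₀ * Y s₀ ≤ (Z s₀)^2) :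
    ∃ s, 0 ≤ X s ∧ 0 ≤ Y s ∧ X s * Y s = (Z s)^2 := by
  set g : ℝ → ℝ := fun s => X s * Y s - (Z s)^2 with hg
  have hgc : Continuous g := by continuity
  have hg0 : 0 < g 0 := by simp [hg, hZ0]; positivity
  set T : Set ℝ := Set.Icc 0 s₀ ∩ {s | g s ≤ 0} with hT
  have hTc : IsCompact T := (isCompact_Icc).inter_right (isClosed_le hgc continuous_const)
  have hTne : T.Nonempty := ⟨s₀, ⟨hs₀, le_refl _⟩, by simp [hg]; linarith⟩
  have hbdd : BddBelow T := hTc.bddBelow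
  set m := sInf T with hm
  have hmT : m ∈ T := hTc.sInf_mem hTne
  obtain ⟨⟨hm0, hms₀⟩, hgm'⟩ := hmT
  have hgm : g m ≤ 0 := hgm'
  have claimA : ∀ s, 0 ≤ s → s < m → 0 < g s := by
    intro s h0 hsm
    by_contra h'
    have : s ∈ T := ⟨⟨h0, hsm.le.trans hms₀⟩, le_of_not_gt h'⟩
    exact absurd (csInf_le hbdd this) (not_le.2 hsm)
  have keyX : 0 ≤ X m := by
    by_contra hXm
    push_neg at hXm
    have : (0:ℝ) ∈ Set.Icc (X m) (X 0) := ⟨hXm.le, hX0.le⟩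
    obtain ⟨s', hs'mem, hs'⟩ := intermediate_value_Icc' hm0 hX.continuousOn this
    have hgs' : g s' ≤ 0 := by simp [hg, hs']; positivity
    rcases lt_or_eq_of_le hs'mem.2 with h1 | h1
    · exact absurd hgs' (not_le.2 (claimA s' hs'mem.1 h1))
    · rw [h1] at hs'; linarith
  have keyY : 0 ≤ Y m := by
    by_contra hYm
    push_neg at hYm
    have : (0:ℝ) ∈ Set.Icc (Y m) (Y 0) := ⟨hYm.le, hY0.le⟩
    obtain ⟨s', hs'mem, hs'⟩ := intermediate_value_Icc' hm0 hY.continuousOn this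
    have hgs' : g s' ≤ 0 := by simp [hg, hs']; positivity
    rcases lt_or_eq_of_le hs'mem.2 with h1 | h1
    · exact absurd hgs' (not_le.2 (claimA s' hs'mem.1 h1))
    · rw [h1] at hs'; linarith
  have keyg : g m = 0 := by
    rcases lt_or_eq_of_le hgm with hlt | heq
    · exfalso
      have : (0:ℝ) ∈ Set.Icc (g m) (g 0) := ⟨hlt.le, hg0.le⟩
      obtain ⟨s', hs'mem, hs'⟩ := intermediate_value_Icc' hm0 hgc.continuousOn this
      rcases lt_or_eq_of_le hs'mem.2 with h1 | h1
      · exact absurd hs' (ne_of_gt (claimA s' hs'mem.1 h1))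
      · rw [h1] at hs'; linarith
    · exact heq
  exact ⟨m, keyX, keyY, by simp [hg] at keyg; linarith⟩

/-- Dines' theorem: the joint range `{(xᵀAx, xᵀBx) : x ∈ ℝⁿ}` of two quadratic
forms given by symmetric matrices is a convex subset of the plane. -/
theorem dines_theorem {n : ℕ} (A B : Matrix (Fin n) (Fin n) ℝ)
    (hA : A.IsSymm) (hB : B.IsSymm) :
    Convex ℝ {p : ℝ × ℝ | ∃ x : Fin n → ℝ,
      p = (x ⬝ᵥ (A *ᵥ x), x ⬝ᵥ (B *ᵥ x))} := by
  rintro p₁ hp₁ p₂ hp₂ a b ha hb hab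
  obtain ⟨x, rfl⟩ := hp₁
  obtain ⟨y, rfl⟩ := hp₂
  set a₁ := x ⬝ᵥ A *ᵥ x with ha₁
  set a₂ := x ⬝ᵥ B *ᵥ x with ha₂
  set b₁ := y ⬝ᵥ A *ᵥ y with hb₁
  set b₂ := y ⬝ᵥ B *ᵥ y with hb₂
  set c₁ := x ⬝ᵥ A *ᵥ y with hc₁
  set c₂ := x ⬝ᵥ B *ᵥ y with hc₂
  simp only [Set.mem_setOf_eq, Prod.smul_mk, smul_eq_mul, Prod.mk_add_mk, Prod.mk.injEq]
  -- suffices to find α β with the right quadratic values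
  suffices h : ∃ α β : ℝ,
      a * a₁ + b * b₁ = α^2 * a₁ + 2*(α*β)*c₁ + β^2 * b₁ ∧
      a * a₂ + b * b₂ = α^2 * a₂ + 2*(α*β)*c₂ + β^2 * b₂ by
    obtain ⟨α, β, h1, h2⟩ := h
    exact ⟨α • x + β • y, by rw [quad_expand A hA x y α β, h1],
      by rw [quad_expand B hB x y α β, h2]⟩
  rcases eq_or_lt_of_le ha with ha0 | ha0
  · have hb1 : b = 1 := by linarith
    refine ⟨0, 1, ?_, ?_⟩ <;> (rw [← ha0, hb1]; ring)
  rcases eq_or_lt_of_le hb with hb0 | hb0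
  · have ha1 : a = 1 := by linarith
    refine ⟨1, 0, ?_, ?_⟩ <;> (rw [← hb0, ha1]; ring)
  -- get a nonzero kernel vector (p, q, r)
  have hdet : (!![a₁, b₁, 2*c₁; a₂, b₂, 2*c₂; 0, 0, 0] : Matrix (Fin 3) (Fin 3) ℝ).det = 0 := by
    apply Matrix.det_eq_zero_of_row_eq_zero 2; intro j; fin_cases j <;> simp
  obtain ⟨v, hv0, hv⟩ := (Matrix.exists_mulVec_eq_zero_iff).mpr hdet
  set p := v 0 with hp
  set q := v 1 with hq
  set r := v 2 with hr
  have hker1 : a₁ * p + b₁ * q + 2*c₁*r = 0 := by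
    have := congr_fun hv 0
    simpa [Matrix.mulVec, dotProduct, Fin.sum_univ_three, mul_assoc, add_assoc] using this
  have hker2 : a₂ * p + b₂ * q + 2*c₂*r = 0 := by
    have := congr_fun hv 1
    simpa [Matrix.mulVec, dotProduct, Fin.sum_univ_three, mul_assoc, add_assoc] using this
  have hpqr : p ≠ 0 ∨ q ≠ 0 ∨ r ≠ 0 := by
    by_contra hc
    push_neg at hc
    apply hv0
    funext i; fin_cases i
    · exact hc.1
    · exact hc.2.1
    · exact hc.2.2
  set X : ℝ → ℝ := fun s => a + s * p with hX
  set Y : ℝ → ℝ := fun s => b + s * q with hY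
  set Z : ℝ → ℝ := fun s => s * r with hZ
  -- find s₀ where X*Y ≤ Z²
  have hs₀ : ∃ s₀ : ℝ, X s₀ * Y s₀ ≤ (Z s₀)^2 := by
    by_cases hpc : p = 0
    · by_cases hqc : q = 0
      · have hrc : r ≠ 0 := by
          rcases hpqr with h | h | h
          · exact absurd hpc h
          · exact absurd hqc h
          · exact h
        refine ⟨1/r, ?_⟩
        simp only [hX, hY, hZ, hpc, hqc, mul_zero, add_zero]
        rw [one_div, inv_mul_cancel₀ hrc]
        nlinarith
      · refine ⟨-b/q, ?_⟩
        have hY0 : Y (-b/q) = 0 := by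
          simp only [hY]; field_simp; ring
        rw [hY0, mul_zero]
        positivity
    · refine ⟨-a/p, ?_⟩
      have hX0 : X (-a/p) = 0 := by
        simp only [hX]; field_simp; ring
      rw [hX0, zero_mul]
      positivity
  obtain ⟨s₀, hs₀⟩ := hs₀
  have hcont : Continuous X ∧ Continuous Y ∧ Continuous Z :=
    ⟨by continuity, by continuity, by continuity⟩
  have hroot : ∃ s, 0 ≤ X s ∧ 0 ≤ Y s ∧ X s * Y s = (Z s)^2 := by
    rcases le_or_gt 0 s₀ with hs | hs
    · exact aux_root X Y Z hcont.1 hcont.2.1 hcont.2.2 (by simpa [hX] using ha0)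
        (by simpa [hY] using hb0) (by simp [hZ]) s₀ hs hs₀
    · obtain ⟨s, h1, h2, h3⟩ := aux_root (fun s => X (-s)) (fun s => Y (-s)) (fun s => Z (-s))
        (hcont.1.comp continuous_neg) (hcont.2.1.comp continuous_neg)
        (hcont.2.2.comp continuous_neg)
        (by simpa [hX] using ha0) (by simpa [hY] using hb0) (by simp [hZ]) (-s₀)
        (by linarith) (by simpa using hs₀)
      exact ⟨-s, h1, h2, h3⟩
  obtain ⟨s, hXs, hYs, hXYZ⟩ := hroot
  -- construct α, β
  have key : ∃ α β : ℝ, α^2 = X s ∧ β^2 = Y s ∧ α*β = Z s := by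
    rcases eq_or_lt_of_le hYs with hY0 | hY0
    · have hZs : Z s = 0 := by
        have : (Z s)^2 = 0 := by rw [← hXYZ, ← hY0]; ring
        exact pow_eq_zero_iff (by norm_num) |>.mp this
      exact ⟨Real.sqrt (X s), 0, Real.sq_sqrt hXs, by simp [← hY0], by simp [hZs]⟩
    · refine ⟨Z s / Real.sqrt (Y s), Real.sqrt (Y s), ?_, Real.sq_sqrt hYs, ?_⟩
      · rw [div_pow, Real.sq_sqrt hYs, ← hXYZ, mul_div_cancel_right₀]
        exact ne_of_gt hY0
      · rw [div_mul_cancel₀]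
        exact ne_of_gt (Real.sqrt_pos.mpr hY0)
  obtain ⟨α, β, hα, hβ, hαβ⟩ := key
  refine ⟨α, β, ?_, ?_⟩
  · rw [hα, hβ, hαβ]
    simp only [hX, hY, hZ]
    linear_combination (-s) * hker1
  · rw [hα, hβ, hαβ]
    simp only [hX, hY, hZ]
    linear_combination (-s) * hker2
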